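/- For 0 < α ≤ π/4, let T_B = (2 − sin²α)|1⟩⟨1| + (1 + sec²α)|2⟩⟨2|. Then T_B ≥ 0, tr_B[P_α (I ⊗ T_B)] ≥ I₃, and tr T_B = 2 + cos²α + sec²α. Combined with the primal feasible solution R_A = (2−sin²α)|0⟩⟨0| + (1+sec²α)|1⟩⟨1|, the quantum fractional packing number A(K_α) equals 2 + cos²α + sec²α. -/

import Mathlib

open Matrix Kronecker Complex ComplexOrder

noncomputable section

abbrev M3 : Type := Matrix (Fin 3) (Fin 3) ℂ
abbrev M9 : Type := Matrix (Fin 3 × Fin 3) (Fin 3 × Fin 3) ℂ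

/-- |i⟩⟨j| on ℂ³ -/
def ket (i j : Fin 3) : M3 := Matrix.single i j 1

def E (α : ℝ) : M3 := (Real.sin α : ℂ) • ket 0 1 + ket 1 2
def D (α : ℝ) : M3 := (Real.cos α : ℂ) • ket 2 1 + ket 1 0

def u (α : ℝ) : Fin 3 × Fin 3 → ℂ := fun p =>
  (((if p = (1,0) then Real.sin α else 0) + (if p = (2,1) then 1 else 0)) /
    Real.sqrt (1 + Real.sin α ^ 2) : ℝ)

def v (α : ℝ) : Fin 3 × Fin 3 → ℂ := fun p =>
  (((if p = (1,2) then Real.cos α else 0) + (if p = (0,1) then 1 else 0)) /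
    Real.sqrt (1 + Real.cos α ^ 2) : ℝ)

/-- Projection onto span{|u_α⟩, |v_α⟩}, the support of the Choi matrix of N_α. -/
def Pproj (α : ℝ) : M9 :=
  vecMulVec (u α) (star (u α)) + vecMulVec (v α) (star (v α))

/-- Partial trace over the first (A) factor. -/
def trA (M : M9) : M3 := fun i j => ∑ k, M (k, i) (k, j)

/-- Partial trace over the second (B) factor. -/
def trB (M : M9) : M3 := fun i j => ∑ k, M (i, k) (j, k)

def TB (α : ℝ) : M3 :=
  ((2 - Real.sin α ^ 2 : ℝ) : ℂ) • ket 1 1 + ((1 + 1 / Real.cos α ^ 2 : ℝ) : ℂ) • ket 2 2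

/-! ### Auxiliary lemmas -/

lemma diag_nonneg' {A : M3} (hA : A.PosSemidef) (i : Fin 3) : 0 ≤ A i i := by
  exact hA.diag_nonneg

def dTB (α : ℝ) : Fin 3 → ℂ :=
  ![0, ((2 - Real.sin α ^ 2 : ℝ) : ℂ), ((1 + 1 / Real.cos α ^ 2 : ℝ) : ℂ)]

lemma TB_eq (α : ℝ) : TB α = Matrix.diagonal (dTB α) := by
  ext i j
  fin_cases i <;> fin_cases j <;>
    simp [TB, ket, Matrix.single, Matrix.diagonal, dTB]

lemma one_kron_diag (d : Fin 3 → ℂ) :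
    ((1 : M3) ⊗ₖ Matrix.diagonal d) = Matrix.diagonal (fun p : Fin 3 × Fin 3 => d p.2) := by
  ext p q
  by_cases h : p = q
  · subst h; simp [kroneckerMap_apply]
  · rcases p with ⟨a,b⟩; rcases q with ⟨c,e⟩
    rw [Matrix.diagonal_apply_ne _ h]
    simp only [kroneckerMap_apply, Matrix.one_apply, Matrix.diagonal_apply]
    by_cases hac : a = c
    · subst hac
      have : b ≠ e := fun hbe => h (by simp [hbe])
      simp [this]
    · simp [hac]

lemma trB_formula (α : ℝ) (i j : Fin 3) :
    trB (Pproj α * ((1 : M3) ⊗ₖ TB α)) i j = ∑ k, Pproj α (i,k) (j,k) * dTB α k := by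
  rw [TB_eq, one_kron_diag]
  simp [trB, Matrix.mul_diagonal]

lemma trA_formula (α : ℝ) (R : M3) (i j : Fin 3) :
    trA (Pproj α * (R ⊗ₖ (1 : M3))) i j = ∑ k, ∑ c, Pproj α (k,i) (c,j) * R c k := by
  unfold trA
  congr 1; ext k
  rw [Matrix.mul_apply]
  rw [Fintype.sum_prod_type]
  congr 1; ext c
  simp [kroneckerMap_apply, Matrix.one_apply, mul_ite, Finset.sum_ite_eq', mul_comm]

lemma trB_eval (α : ℝ) (hc0 : Real.cos α ≠ 0) :
    trB (Pproj α * ((1 : M3) ⊗ₖ TB α)) =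
      Matrix.diagonal ![((((2 - Real.sin α ^2)/(1+Real.cos α ^2) :ℝ)):ℂ),
        (((Real.cos α^2 * (1 + 1/Real.cos α^2))/(1+Real.cos α^2) : ℝ):ℂ),
        (((2 - Real.sin α ^2)/(1 + Real.sin α ^2) : ℝ) : ℂ)] := by
  set s := Real.sin α with hs
  set c := Real.cos α with hc
  have hs1 : Real.sqrt (1 + s ^ 2) * Real.sqrt (1 + s ^ 2) = 1 + s ^ 2 :=
    Real.mul_self_sqrt (by positivity)
  have hc1 : Real.sqrt (1 + c ^ 2) * Real.sqrt (1 + c ^ 2) = 1 + c ^ 2 :=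
    Real.mul_self_sqrt (by positivity)
  have hs1' : Real.sqrt (1 + s ^ 2) ≠ 0 := by positivity
  have hc1' : Real.sqrt (1 + c ^ 2) ≠ 0 := by positivity
  have hsp : (1:ℝ) + s ^ 2 ≠ 0 := by positivity
  have hcp : (1:ℝ) + c ^ 2 ≠ 0 := by positivity
  have hS : ((Real.sqrt (1 + Real.sin α ^ 2) : ℝ) : ℂ) ^ 2 = 1 + (Real.sin α : ℂ) ^ 2 := by
    rw [← Complex.ofReal_pow, Real.sq_sqrt (by positivity)]; push_cast; rfl
  have hC : ((Real.sqrt (1 + Real.cos α ^ 2) : ℝ) : ℂ) ^ 2 = 1 + (Real.cos α : ℂ) ^ 2 := by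
    rw [← Complex.ofReal_pow, Real.sq_sqrt (by positivity)]; push_cast; rfl
  have hS' : (1 + (Real.sin α : ℂ) ^ 2) ≠ 0 := by exact_mod_cast hsp
  have hC' : (1 + (Real.cos α : ℂ) ^ 2) ≠ 0 := by exact_mod_cast hcp
  have hc0c : (Real.cos α : ℂ) ≠ 0 := by exact_mod_cast hc0
  ext i j
  rw [trB_formula]
  fin_cases i <;> fin_cases j
  all_goals simp [Pproj, u, v, dTB, vecMulVec_apply, Fin.sum_univ_three, Prod.ext_iff,
      Matrix.diagonal, -Complex.ofReal_div, -Complex.ofReal_sin, -Complex.ofReal_cos, -Real.sqrt_inv]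
  all_goals push_cast [-Complex.ofReal_sin, -Complex.ofReal_cos]
  all_goals simp only [hs, hc, ← sq, inv_pow, div_pow, hS, hC]
  all_goals field_simp
  all_goals ring

lemma trA11 (α : ℝ) (R : M3) :
    trA (Pproj α * (R ⊗ₖ (1 : M3))) 1 1 =
      (((1 + Real.sin α ^2 : ℝ))⁻¹ : ℂ) * R 2 2 + (((1 + Real.cos α ^2 : ℝ))⁻¹ : ℂ) * R 0 0 := by
  set s := Real.sin α with hsdef
  set c := Real.cos α with hcdef
  have hs1 : ((Real.sqrt (1 + s ^ 2) : ℝ) : ℂ) * ((Real.sqrt (1 + s ^ 2) : ℝ) : ℂ)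
      = ((1 + s ^ 2 : ℝ) : ℂ) := by
    norm_cast; exact Real.mul_self_sqrt (by positivity)
  have hc1 : ((Real.sqrt (1 + c ^ 2) : ℝ) : ℂ) * ((Real.sqrt (1 + c ^ 2) : ℝ) : ℂ)
      = ((1 + c ^ 2 : ℝ) : ℂ) := by
    norm_cast; exact Real.mul_self_sqrt (by positivity)
  have hs1' : ((Real.sqrt (1 + s ^ 2) : ℝ) : ℂ) ≠ 0 := by norm_cast; positivity
  have hc1' : ((Real.sqrt (1 + c ^ 2) : ℝ) : ℂ) ≠ 0 := by norm_cast; positivity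
  have hsp : ((1 + s ^ 2 : ℝ) : ℂ) ≠ 0 := by norm_cast; positivity
  have hcp : ((1 + c ^ 2 : ℝ) : ℂ) ≠ 0 := by norm_cast; positivity
  rw [trA_formula]
  simp [Pproj, u, v, vecMulVec_apply, Fin.sum_univ_three, Prod.ext_iff]
  simp only [← hsdef, ← hcdef]
  try field_simp
  rw [← sq] at hs1 hc1
  rw [hs1, hc1]
  have hsp2 : (1 + (s:ℂ) ^ 2) ≠ 0 := by simpa using hsp
  have hcp2 : (1 + (c:ℂ) ^ 2) ≠ 0 := by simpa using hcp
  push_cast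
  field_simp
  ring

lemma trA22 (α : ℝ) (R : M3) :
    trA (Pproj α * (R ⊗ₖ (1 : M3))) 2 2 =
      ((Real.cos α ^2 / (1 + Real.cos α ^2) : ℝ) : ℂ) * R 1 1 := by
  set c := Real.cos α with hcdef
  have hc1 : ((Real.sqrt (1 + c ^ 2) : ℝ) : ℂ) * ((Real.sqrt (1 + c ^ 2) : ℝ) : ℂ)
      = ((1 + c ^ 2 : ℝ) : ℂ) := by
    norm_cast; exact Real.mul_self_sqrt (by positivity)
  have hc1' : ((Real.sqrt (1 + c ^ 2) : ℝ) : ℂ) ≠ 0 := by norm_cast; positivity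
  have hcp : ((1 + c ^ 2 : ℝ) : ℂ) ≠ 0 := by norm_cast; positivity
  rw [trA_formula]
  simp [Pproj, u, v, vecMulVec_apply, Fin.sum_univ_three, Prod.ext_iff,
    -Complex.ofReal_div]
  simp only [← hcdef]
  try field_simp
  left
  rw [← Complex.ofReal_pow, div_pow, Real.sq_sqrt (by positivity)]

/-- The explicit primal optimizer. -/
def Rstar (α : ℝ) : M3 :=
  Matrix.diagonal ![((2 - Real.sin α ^ 2 : ℝ) : ℂ), ((1 + 1 / Real.cos α ^ 2 : ℝ) : ℂ), 0]

lemma trA_Rstar (α : ℝ) (hc0 : Real.cos α ≠ 0) :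
    trA (Pproj α * (Rstar α ⊗ₖ (1 : M3))) =
      Matrix.diagonal ![(((Real.sin α ^2 * (1 + 1/Real.cos α ^2))/(1 + Real.sin α ^2) : ℝ) : ℂ),
        (((2 - Real.sin α ^2)/(1 + Real.cos α ^2) : ℝ) : ℂ),
        (((Real.cos α ^2 * (1 + 1/Real.cos α ^2))/(1 + Real.cos α ^2) : ℝ) : ℂ)] := by
  set s := Real.sin α with hsdef
  set c := Real.cos α with hcdef
  have hs1 : Real.sqrt (1 + s ^ 2) * Real.sqrt (1 + s ^ 2) = 1 + s ^ 2 :=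
    Real.mul_self_sqrt (by positivity)
  have hc1 : Real.sqrt (1 + c ^ 2) * Real.sqrt (1 + c ^ 2) = 1 + c ^ 2 :=
    Real.mul_self_sqrt (by positivity)
  have hs1' : Real.sqrt (1 + s ^ 2) ≠ 0 := by positivity
  have hc1' : Real.sqrt (1 + c ^ 2) ≠ 0 := by positivity
  have hsp : (1:ℝ) + s ^ 2 ≠ 0 := by positivity
  have hcp : (1:ℝ) + c ^ 2 ≠ 0 := by positivity
  have hS : ((Real.sqrt (1 + Real.sin α ^ 2) : ℝ) : ℂ) ^ 2 = 1 + (Real.sin α : ℂ) ^ 2 := by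
    rw [← Complex.ofReal_pow, Real.sq_sqrt (by positivity)]; push_cast; rfl
  have hC : ((Real.sqrt (1 + Real.cos α ^ 2) : ℝ) : ℂ) ^ 2 = 1 + (Real.cos α : ℂ) ^ 2 := by
    rw [← Complex.ofReal_pow, Real.sq_sqrt (by positivity)]; push_cast; rfl
  have hS' : (1 + (Real.sin α : ℂ) ^ 2) ≠ 0 := by exact_mod_cast hsp
  have hC' : (1 + (Real.cos α : ℂ) ^ 2) ≠ 0 := by exact_mod_cast hcp
  have hc0c : (Real.cos α : ℂ) ≠ 0 := by exact_mod_cast hc0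
  ext i j
  rw [trA_formula]
  fin_cases i <;> fin_cases j
  all_goals simp [Pproj, u, v, Rstar, vecMulVec_apply, Fin.sum_univ_three, Prod.ext_iff,
      Matrix.diagonal, -Complex.ofReal_div, -Complex.ofReal_sin, -Complex.ofReal_cos, -Real.sqrt_inv]
  all_goals push_cast [-Complex.ofReal_sin, -Complex.ofReal_cos]
  all_goals simp only [hsdef, hcdef, ← sq, inv_pow, div_pow, hS, hC]
  all_goals field_simp
  all_goals ring

lemma aux_sub (x : ℝ) (h : 1 ≤ x) : (0:ℂ) ≤ (x:ℂ) - 1 := by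
  rw [show ((1:ℂ)) = ((1:ℝ):ℂ) by norm_cast, ← Complex.ofReal_sub, Complex.zero_le_real]
  linarith

lemma aux_sub' (x : ℝ) (h : x ≤ 1) : (0:ℂ) ≤ 1 - (x:ℂ) := by
  rw [show ((1:ℂ)) = ((1:ℝ):ℂ) by norm_cast, ← Complex.ofReal_sub, Complex.zero_le_real]
  linarith

/-- Dual feasibility of T_B and the value of the quantum fractional packing number. -/
theorem packing_number (α : ℝ) (hα : 0 < α) (hα' : α ≤ Real.pi / 4) :
    (TB α).PosSemidef ∧
    (trB (Pproj α * ((1 : M3) ⊗ₖ TB α)) - (1 : M3)).PosSemidef ∧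
    (TB α).trace = ((2 + Real.cos α ^ 2 + 1 / Real.cos α ^ 2 : ℝ) : ℂ) ∧
    IsGreatest {x : ℝ | ∃ R : M3, R.PosSemidef ∧
        ((1 : M3) - trA (Pproj α * (R ⊗ₖ (1 : M3)))).PosSemidef ∧ x = (R.trace).re}
      (2 + Real.cos α ^ 2 + 1 / Real.cos α ^ 2) := by
  have hcpos : 0 < Real.cos α := by
    apply Real.cos_pos_of_mem_Ioo
    constructor
    · linarith [Real.pi_pos]
    · linarith [Real.pi_pos]
  have hc0 : Real.cos α ≠ 0 := ne_of_gt hcpos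
  have hspos : 0 < Real.sin α := Real.sin_pos_of_pos_of_lt_pi hα (by linarith [Real.pi_pos])
  have hsc : Real.sin α ≤ Real.cos α := by
    rw [← Real.cos_pi_div_two_sub]
    apply Real.cos_le_cos_of_nonneg_of_le_pi
    · linarith [Real.pi_pos]
    · linarith [Real.pi_pos]
    · linarith
  have hpyth : Real.sin α ^ 2 + Real.cos α ^ 2 = 1 := Real.sin_sq_add_cos_sq α
  set s := Real.sin α with hsdef
  set c := Real.cos α with hcdef
  have hsp : (0:ℝ) < 1 + s ^ 2 := by positivity
  have hcp : (0:ℝ) < 1 + c ^ 2 := by positivity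
  have hc2 : (0:ℝ) < c ^ 2 := by positivity
  have hs2c2 : s ^ 2 ≤ c ^ 2 := by nlinarith
  refine ⟨?_, ?_, ?_, ?_, ?_⟩
  · -- TB PSD
    rw [TB_eq]
    refine Matrix.posSemidef_diagonal_iff.mpr fun i => ?_
    fin_cases i
    · exact le_refl 0
    · exact Complex.zero_le_real.mpr (by nlinarith)
    · exact Complex.zero_le_real.mpr (by positivity)
  · -- dual feasibility
    rw [trB_eval α hc0]
    have h1 : ((1:M3)) = Matrix.diagonal (fun _ : Fin 3 => (1:ℂ)) := by
      simp [Matrix.diagonal_one]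
    rw [h1, Matrix.diagonal_sub]
    refine Matrix.posSemidef_diagonal_iff.mpr fun i => ?_
    fin_cases i
    · exact aux_sub _ (by rw [le_div_iff₀ hcp]; nlinarith)
    · refine aux_sub _ ?_
      rw [le_div_iff₀ hcp]
      have e : c^2*(1+1/c^2) = c^2+1 := by field_simp
      rw [e]; linarith
    · exact aux_sub _ (by rw [le_div_iff₀ hsp]; nlinarith)
  · -- trace value
    rw [TB_eq]
    simp only [Matrix.trace, Matrix.diag, Matrix.diagonal_apply_eq, dTB, Fin.sum_univ_three,
      Matrix.cons_val_zero, Matrix.cons_val_one, Matrix.head_cons, Matrix.cons_val_two,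
      Matrix.tail_cons, Fin.isValue]
    rw [zero_add, ← Complex.ofReal_add]
    norm_cast
    simp only [← hsdef, ← hcdef]
    field_simp
    nlinarith
  · -- membership
    refine ⟨Rstar α, ?_, ?_, ?_⟩
    · refine Matrix.posSemidef_diagonal_iff.mpr fun i => ?_
      fin_cases i
      · exact Complex.zero_le_real.mpr (by nlinarith)
      · exact Complex.zero_le_real.mpr (by positivity)
      · exact le_refl 0
    · rw [trA_Rstar α hc0]
      have h1 : ((1:M3)) = Matrix.diagonal (fun _ : Fin 3 => (1:ℂ)) := by
        simp [Matrix.diagonal_one]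
      rw [h1, Matrix.diagonal_sub]
      refine Matrix.posSemidef_diagonal_iff.mpr fun i => ?_
      fin_cases i
      · refine aux_sub' _ ?_
        rw [div_le_one hsp]
        have h2 : s^2/c^2 ≤ 1 := by rw [div_le_one hc2]; exact hs2c2
        have e : s^2*(1+1/c^2) = s^2 + s^2/c^2 := by ring
        rw [e]; linarith
      · exact aux_sub' _ (by rw [div_le_one hcp]; nlinarith)
      · refine aux_sub' _ ?_
        rw [div_le_one hcp]
        have e : c^2*(1+1/c^2) = c^2+1 := by field_simp
        rw [e]; linarith
    · simp only [Rstar, Matrix.trace, Matrix.diag, Matrix.diagonal_apply_eq, Fin.sum_univ_three,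
        Matrix.cons_val_zero, Matrix.cons_val_one, Matrix.head_cons, Matrix.cons_val_two,
        Matrix.tail_cons, Fin.isValue, add_zero]
      rw [← Complex.ofReal_add, Complex.ofReal_re]
      simp only [← hsdef, ← hcdef]
      field_simp
      nlinarith
  · -- upper bound
    rintro x ⟨R, hR, hfeas, rfl⟩
    have hA : 0 ≤ (R 0 0).re := by
      have := Complex.le_def.mp (diag_nonneg' hR 0); simpa using this.1
    have hB : 0 ≤ (R 1 1).re := by
      have := Complex.le_def.mp (diag_nonneg' hR 1); simpa using this.1
    have hC : 0 ≤ (R 2 2).re := by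
      have := Complex.le_def.mp (diag_nonneg' hR 2); simpa using this.1
    have h11 : 0 ≤ ((1:M3) - trA (Pproj α * (R ⊗ₖ (1 : M3)))) 1 1 := diag_nonneg' hfeas 1
    have h22 : 0 ≤ ((1:M3) - trA (Pproj α * (R ⊗ₖ (1 : M3)))) 2 2 := diag_nonneg' hfeas 2
    rw [Matrix.sub_apply, Matrix.one_apply_eq, trA11, ← Complex.ofReal_inv,
      ← Complex.ofReal_inv] at h11
    rw [Matrix.sub_apply, Matrix.one_apply_eq, trA22] at h22
    have h11' := (Complex.le_def.mp h11).1
    have h22' := (Complex.le_def.mp h22).1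
    simp only [Complex.zero_re, Complex.sub_re, Complex.one_re, Complex.add_re,
      Complex.mul_re, Complex.ofReal_re, Complex.ofReal_im, zero_mul, sub_zero] at h11' h22'
    rw [← hsdef, ← hcdef] at h11'
    rw [← hcdef] at h22'
    have htr : (R.trace).re = (R 0 0).re + (R 1 1).re + (R 2 2).re := by
      simp [Matrix.trace, Matrix.diag, Fin.sum_univ_three]
    rw [htr]
    have key1 : (1 + s^2)⁻¹ * (R 2 2).re + (1 + c^2)⁻¹ * (R 0 0).re ≤ 1 := by linarith
    have key2 : c^2 / (1 + c^2) * (R 1 1).re ≤ 1 := by linarith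
    have e1 : (R 2 2).re * (1 + c^2) + (R 0 0).re * (1 + s^2) ≤ (1 + s^2) * (1 + c^2) := by
      have := mul_le_mul_of_nonneg_left key1 (le_of_lt (mul_pos hsp hcp))
      rw [mul_one] at this
      calc (R 2 2).re * (1 + c^2) + (R 0 0).re * (1 + s^2)
          = (1 + s^2) * (1 + c^2) * ((1 + s^2)⁻¹ * (R 2 2).re + (1 + c^2)⁻¹ * (R 0 0).re) := by
            field_simp; try ring
        _ ≤ (1 + s^2) * (1 + c^2) := this
    have e2 : c^2 * (R 1 1).re ≤ 1 + c^2 := by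
      have := mul_le_mul_of_nonneg_left key2 (le_of_lt hcp)
      rw [mul_one] at this
      calc c^2 * (R 1 1).re = (1 + c^2) * (c^2 / (1 + c^2) * (R 1 1).re) := by
            field_simp; try ring
        _ ≤ 1 + c^2 := this
    have hAC : (R 0 0).re + (R 2 2).re ≤ 1 + c^2 := by nlinarith
    have hBb : (R 1 1).re ≤ 1 + 1/c^2 := by
      rw [show (1:ℝ) + 1/c^2 = (1 + c^2)/c^2 by field_simp; ring]
      rw [le_div_iff₀ hc2]
      nlinarith
    linarith
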